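/- Let f be a non-decreasing submodular set function on a finite ground set V, let OPT ⊆ V have size k, and let S ⊆ V with |S| ≤ k. Let B ⊆ OPT \ S be a subset of size k − |S| maximizing f(B ∪ S) among all subsets of OPT \ S of that size. Then for any non-empty C ⊆ OPT \ S, we have f(C ∪ S) − f(S) ≤ ⌈|C| / |B|⌉ · (f(B ∪ S) − f(S)). -/

import Mathlib

open Finset

private lemma set_submod {V : Type*} [DecidableEq V]
    (f : Finset V → ℝ)
    (hmono : ∀ A B : Finset V, A ⊆ B → f A ≤ f B)
    (hsub : ∀ (A B : Finset V) (e : V), A ⊆ B → e ∉ B →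
      f (insert e B) - f B ≤ f (insert e A) - f A)
    (X : Finset V) : ∀ A B : Finset V, A ⊆ B →
    f (X ∪ B) - f B ≤ f (X ∪ A) - f A := by
  induction X using Finset.induction_on with
  | empty => intro A B h; simp
  | @insert a X' ha ih =>
    intro A B h
    rw [insert_union, insert_union]
    by_cases haB : a ∈ B
    · have he : insert a (X' ∪ B) = X' ∪ B := insert_eq_self.2 (mem_union_right _ haB)
      rw [he]
      have h1 := ih A B h
      have h2 := hmono (X' ∪ A) (insert a (X' ∪ A)) (subset_insert _ _)
      linarith
    · have haXB : a ∉ X' ∪ B := by simp [ha, haB]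
      have h1 := hsub (X' ∪ A) (X' ∪ B) a (union_subset_union_right h) haXB
      have h2 := ih A B h
      linarith

theorem exchange_lemma
    {V : Type*} [Fintype V] [DecidableEq V]
    (f : Finset V → ℝ)
    (hmono : ∀ A B : Finset V, A ⊆ B → f A ≤ f B)
    (hsub : ∀ (A B : Finset V) (e : V), A ⊆ B → e ∉ B →
      f (insert e B) - f B ≤ f (insert e A) - f A)
    (k : ℕ) (OPT S B : Finset V)
    (hOPT : OPT.card = k) (hS : S.card ≤ k)
    (hBsub : B ⊆ OPT \ S) (hBcard : B.card = k - S.card) (hBpos : 1 ≤ B.card)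
    (hBmax : ∀ Z ⊆ OPT \ S, Z.card = k - S.card → f (Z ∪ S) ≤ f (B ∪ S))
    (C : Finset V) (hC : C ⊆ OPT \ S) (hCne : C.Nonempty) :
    f (C ∪ S) - f S ≤ (⌈(C.card : ℝ) / (B.card : ℝ)⌉ : ℝ) * (f (B ∪ S) - f S) := by
  have hsd : k - S.card ≤ (OPT \ S).card := by
    have h1 : OPT ⊆ (OPT \ S) ∪ S := by
      intro x hx
      by_cases hxS : x ∈ S <;> simp [hx, hxS]
    have h2 := (card_le_card h1).trans (card_union_le _ _)
    omega
  have key : ∀ D ⊆ OPT \ S, D.card ≤ k - S.card → f (D ∪ S) ≤ f (B ∪ S) := by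
    intro D hD hDcard
    obtain ⟨Z, hDZ, hZsub, hZcard⟩ :=
      Finset.exists_subsuperset_card_eq (n := ((k - S.card) - D.card) + D.card) hD (by omega) (by omega)
    have hZc : Z.card = k - S.card := by omega
    exact (hmono _ _ (union_subset_union_left hDZ)).trans (hBmax Z hZsub hZc)
  have hBge : f S ≤ f (B ∪ S) := hmono _ _ subset_union_right
  have hbpos : (0:ℝ) < (B.card : ℝ) := by exact_mod_cast hBpos
  have main : ∀ n : ℕ, ∀ C : Finset V, C ⊆ OPT \ S → C.Nonempty → C.card = n →
      f (C ∪ S) - f S ≤ (⌈(C.card : ℝ) / (B.card : ℝ)⌉ : ℝ) * (f (B ∪ S) - f S) := by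
    intro n
    induction n using Nat.strong_induction_on with
    | _ n ih =>
      intro C hC hCne hCn
      have hcpos : (0:ℝ) < (C.card : ℝ) := by
        exact_mod_cast card_pos.2 hCne
      by_cases hsmall : C.card ≤ B.card
      · have hceil : ⌈(C.card : ℝ) / (B.card : ℝ)⌉ = 1 := by
          rw [Int.ceil_eq_iff]
          constructor
          · simpa using div_pos hcpos hbpos
          · push_cast
            rw [div_le_one hbpos]
            exact_mod_cast hsmall
        rw [hceil]
        have hCk : f (C ∪ S) ≤ f (B ∪ S) := key C hC (by omega)
        push_cast
        linarith
      · push_neg at hsmall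
        obtain ⟨C₀, hC₀sub, hC₀card⟩ := Finset.exists_subset_card_eq hsmall.le
        set C' := C \ C₀ with hC'def
        have hC'card : C'.card = C.card - B.card := by rw [hC'def, card_sdiff_of_subset hC₀sub, hC₀card]
        have hC'ne : C'.Nonempty := by
          rw [← card_pos, hC'card]; omega
        have hC'sub : C' ⊆ OPT \ S := (sdiff_subset).trans hC
        -- f(C∪S) - f(C'∪S) ≤ f(C₀∪S) - f S
        have hstep : f (C ∪ S) - f (C' ∪ S) ≤ f (C₀ ∪ S) - f S := by
          have := set_submod f hmono hsub C₀ S (C' ∪ S) subset_union_right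
          have hu : C₀ ∪ (C' ∪ S) = C ∪ S := by
            rw [← union_assoc]
            congr 1
            rw [hC'def, union_sdiff_self_eq_union, union_eq_right.2 hC₀sub]
          rwa [hu] at this
        have h0 : f (C₀ ∪ S) ≤ f (B ∪ S) :=
          key C₀ (hC₀sub.trans hC) (by omega)
        have hih := ih C'.card (by rw [hC'card]; omega) C' hC'sub hC'ne rfl
        have hceil : ⌈(C.card : ℝ) / (B.card : ℝ)⌉ = ⌈(C'.card : ℝ) / (B.card : ℝ)⌉ + 1 := by
          have hc' : (C'.card : ℝ) = (C.card : ℝ) - (B.card : ℝ) := by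
            rw [hC'card]
            push_cast [Nat.cast_sub hsmall.le]
            ring
          rw [hc', sub_div, div_self hbpos.ne']
          rw [Int.ceil_sub_one]
          ring
        rw [hceil]
        push_cast
        linarith
  exact main C.card C hC hCne rfl
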